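/- Let K be an algebraically closed field of characteristic 0 and n ≥ 9. For t ∈ K, the alternating bilinear bracket on K^n with basis e₁,…,e_n determined by [e₁, e_i] = e_{i+1} for 2 ≤ i ≤ n−1 with i ≠ 3; [e₂, e_i] = (1 − (i−4)t)·e_{i+2} for 4 ≤ i ≤ n−2; [e₃, e_i] = t·e_{i+3} for 4 ≤ i ≤ n−3; and [e_i, e_j] = 0 for all other pairs i < j, satisfies the Jacobi identity if and only if t = 0. -/
import Mathlib


/-- The basis vector `e_{p+1}` of `K^n` (0-based index `p`). -/
def stdVec (K : Type) [Field K] (n p : ℕ) : Fin n → K :=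
  fun k => if (k : ℕ) = p then 1 else 0

/-- The values `[e_{i+1}, e_{j+1}]` (0-based `i < j`) of the bracket of `𝔞_{4,n}(t)`:
`[e₁,e_i] = e_{i+1}` for `2 ≤ i ≤ n−1`, `i ≠ 3`; `[e₂,e_i] = (1−(i−4)t)e_{i+2}` for
`4 ≤ i ≤ n−2`; `[e₃,e_i] = t e_{i+3}` for `4 ≤ i ≤ n−3`; all other brackets `0`. -/
noncomputable def aBrVal {K : Type} [Field K] (n : ℕ) (t : K) (i j : ℕ) : Fin n → K :=
  if i = 0 ∧ 1 ≤ j ∧ j + 2 ≤ n ∧ j ≠ 2 then stdVec K n (j + 1)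
  else if i = 1 ∧ 3 ≤ j ∧ j + 3 ≤ n then (1 - ((j : K) - 3) * t) • stdVec K n (j + 2)
  else if i = 2 ∧ 3 ≤ j ∧ j + 4 ≤ n then t • stdVec K n (j + 3)
  else 0

/-- The alternating bilinear bracket of `𝔞_{4,n}(t)` on `K^n`, determined by the values
`aBrVal` on basis vectors together with antisymmetry. -/
noncomputable def aBr {K : Type} [Field K] (n : ℕ) (t : K) (x y : Fin n → K) :
    Fin n → K :=
  ∑ i : Fin n, ∑ j : Fin n,
    (x i * y j) •
      (if (i : ℕ) < (j : ℕ) then aBrVal n t i j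
       else if (j : ℕ) < (i : ℕ) then -aBrVal n t j i else 0)


variable {K : Type} [Field K]

lemma stdVec_oob {n p : ℕ} (h : n ≤ p) : stdVec K n p = 0 := by
  funext k
  simp only [stdVec, Pi.zero_apply, ite_eq_right_iff]
  intro hk
  omega

lemma aBr_zero_left (n : ℕ) (t : K) (y : Fin n → K) : aBr n t 0 y = 0 := by
  simp [aBr]

lemma aBr_zero_right (n : ℕ) (t : K) (x : Fin n → K) : aBr n t x 0 = 0 := by
  simp [aBr]

lemma aBr_smul_left (n : ℕ) (t : K) (c : K) (x y : Fin n → K) :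
    aBr n t (c • x) y = c • aBr n t x y := by
  simp [aBr, Finset.smul_sum, smul_smul, mul_assoc]

lemma aBr_neg_left (n : ℕ) (t : K) (x y : Fin n → K) : aBr n t (-x) y = -aBr n t x y := by
  have h : (-x) = (-1 : K) • x := by funext k; simp
  rw [h, aBr_smul_left]
  funext k
  simp

lemma aBr_std (n : ℕ) (t : K) {p q : ℕ} (hp : p < n) (hq : q < n) :
    aBr n t (stdVec K n p) (stdVec K n q) =
      if p < q then aBrVal n t p q
      else if q < p then -aBrVal n t q p else 0 := by
  unfold aBr
  rw [Finset.sum_eq_single (⟨p, hp⟩ : Fin n)]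
  · rw [Finset.sum_eq_single (⟨q, hq⟩ : Fin n)]
    · simp [stdVec]
    · intro b _ hb
      have : (b : ℕ) ≠ q := fun h => hb (Fin.ext h)
      simp [stdVec, this]
    · intro h
      exact absurd (Finset.mem_univ _) h
  · intro b _ hb
    have : (b : ℕ) ≠ p := fun h => hb (Fin.ext h)
    simp [stdVec, this]
  · intro h
    exact absurd (Finset.mem_univ _) h

lemma aBr_eq (n : ℕ) (t : K) (x y : Fin n → K) :
    aBr n t x y = ∑ p : Fin n, ∑ q : Fin n,
      (x p * y q) • aBr n t (stdVec K n p) (stdVec K n q) := by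
  conv_lhs => rw [aBr]
  exact Finset.sum_congr rfl fun p _ => Finset.sum_congr rfl fun q _ => by
    rw [aBr_std n t p.isLt q.isLt]

lemma aBr_collapse (n : ℕ) (t : K) (w : Fin n → K) (r : Fin n) :
    aBr n t w (stdVec K n r) = ∑ i : Fin n, (w i) •
      (if (i : ℕ) < (r : ℕ) then aBrVal n t i r
       else if (r : ℕ) < (i : ℕ) then -aBrVal n t r i else 0) := by
  rw [aBr]
  refine Finset.sum_congr rfl fun i _ => ?_
  rw [Finset.sum_eq_single r]
  · simp [stdVec]
  · intro b _ hb
    have : (b : ℕ) ≠ (r : ℕ) := fun h => hb (Fin.ext h)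
    simp [stdVec, this]
  · intro h
    exact absurd (Finset.mem_univ _) h

lemma aBr_expand_right (n : ℕ) (t : K) (w z : Fin n → K) :
    aBr n t w z = ∑ r : Fin n, z r • aBr n t w (stdVec K n r) := by
  conv_lhs => rw [aBr]
  rw [Finset.sum_comm]
  refine Finset.sum_congr rfl fun j _ => ?_
  rw [aBr_collapse, Finset.smul_sum]
  refine Finset.sum_congr rfl fun i _ => ?_
  rw [smul_smul, mul_comm]

lemma aBr_sum_left (n : ℕ) (t : K) {ι : Type*} (s : Finset ι) (f : ι → Fin n → K)
    (y : Fin n → K) :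
    aBr n t (∑ i ∈ s, f i) y = ∑ i ∈ s, aBr n t (f i) y := by
  simp only [aBr, Finset.sum_apply, Finset.sum_mul, Finset.sum_smul]
  calc ∑ a : Fin n, ∑ b : Fin n, ∑ i ∈ s, ((f i a * y b) • _)
      = ∑ a : Fin n, ∑ i ∈ s, ∑ b : Fin n, ((f i a * y b) • _) :=
        Finset.sum_congr rfl fun _ _ => Finset.sum_comm
    _ = ∑ i ∈ s, ∑ a : Fin n, ∑ b : Fin n, ((f i a * y b) • _) := Finset.sum_comm

lemma stdVec_apply (n p : ℕ) (k : Fin n) :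
    stdVec K n p k = if (k : ℕ) = p then 1 else 0 := rfl

set_option maxHeartbeats 1000000 in
lemma bst {n : ℕ} (hn : 9 ≤ n) (p q : ℕ) :
    aBr n (0 : K) (stdVec K n p) (stdVec K n q) =
      if p = 0 then
        (if q = 2 then 0 else if 1 ≤ q then (if q + 2 ≤ n then stdVec K n (q + 1) else 0) else 0)
      else if p = 1 then
        (if q = 0 then (if p + 2 ≤ n then -stdVec K n (p + 1) else 0)
         else if 3 ≤ q then (if q + 3 ≤ n then stdVec K n (q + 2) else 0) else 0)
      else if q = 0 then
        (if p = 2 then 0 else if p + 2 ≤ n then -stdVec K n (p + 1) else 0)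
      else if q = 1 then
        (if 3 ≤ p then (if p + 3 ≤ n then -stdVec K n (p + 2) else 0) else 0)
      else 0 := by
  by_cases hp : p < n
  · by_cases hq : q < n
    · rw [aBr_std n 0 hp hq]
      unfold aBrVal
      split_ifs <;> first | (exfalso; omega) | rfl | simp
    · rw [stdVec_oob (le_of_not_gt hq), aBr_zero_right]
      split_ifs <;> first | (exfalso; omega) | rfl | (rw [stdVec_oob (by omega)]) | (rw [stdVec_oob (by omega), neg_zero])
  · rw [stdVec_oob (le_of_not_gt hp), aBr_zero_left]
    split_ifs <;> first | (exfalso; omega) | rfl | (rw [stdVec_oob (by omega)]) | (rw [stdVec_oob (by omega), neg_zero])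

lemma fw12 {n : ℕ} (hn : 9 ≤ n) (t : K) :
    aBr n t (stdVec K n 1) (stdVec K n 2) = 0 := by
  rw [aBr_std n t (by omega) (by omega), if_pos (by norm_num)]
  unfold aBrVal
  rw [if_neg (by omega), if_neg (by omega), if_neg (by omega)]

lemma fw23 {n : ℕ} (hn : 9 ≤ n) (t : K) :
    aBr n t (stdVec K n 2) (stdVec K n 3) = t • stdVec K n 6 := by
  rw [aBr_std n t (by omega) (by omega), if_pos (by norm_num)]
  unfold aBrVal
  rw [if_neg (by omega), if_neg (by omega), if_pos (by omega)]

lemma fw61 {n : ℕ} (hn : 9 ≤ n) (t : K) :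
    aBr n t (stdVec K n 6) (stdVec K n 1)
      = -((1 - 3 * t) • stdVec K n 8) := by
  rw [aBr_std n t (by omega) (by omega), if_neg (by norm_num), if_pos (by norm_num)]
  unfold aBrVal
  rw [if_neg (by omega), if_pos (by omega)]
  norm_num

lemma fw31 {n : ℕ} (hn : 9 ≤ n) (t : K) :
    aBr n t (stdVec K n 3) (stdVec K n 1)
      = -stdVec K n 5 := by
  rw [aBr_std n t (by omega) (by omega), if_neg (by norm_num), if_pos (by norm_num)]
  unfold aBrVal
  rw [if_neg (by omega), if_pos (by omega)]
  norm_num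

lemma fw52 {n : ℕ} (hn : 9 ≤ n) (t : K) :
    aBr n t (stdVec K n 5) (stdVec K n 2) = -(t • stdVec K n 8) := by
  rw [aBr_std n t (by omega) (by omega), if_neg (by norm_num), if_pos (by norm_num)]
  unfold aBrVal
  rw [if_neg (by omega), if_neg (by omega), if_pos (by omega)]


attribute [irreducible] stdVec aBrVal aBr

set_option maxHeartbeats 4000000 in
lemma dbl {n : ℕ} (hn : 9 ≤ n) (p q r : ℕ) :
    aBr n (0 : K) (aBr n 0 (stdVec K n p) (stdVec K n q)) (stdVec K n r) =
      if p = 0 then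
        (if r = 0 then (if 3 ≤ q then (if q + 3 ≤ n then -stdVec K n (q + 2) else 0) else 0)
         else if r = 1 then (if 3 ≤ q then (if q + 4 ≤ n then -stdVec K n (q + 3) else 0) else 0)
         else 0)
      else if p = 1 then
        (if r = 0 then (if 3 ≤ q then (if q + 4 ≤ n then -stdVec K n (q + 3) else 0) else 0)
         else if r = 1 then (if 3 ≤ q then (if q + 5 ≤ n then -stdVec K n (q + 4) else 0) else 0)
         else 0)
      else if q = 0 then
        (if r = 0 then (if 3 ≤ p then (if p + 3 ≤ n then stdVec K n (p + 2) else 0) else 0)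
         else if r = 1 then (if 3 ≤ p then (if p + 4 ≤ n then stdVec K n (p + 3) else 0) else 0)
         else 0)
      else if q = 1 then
        (if r = 0 then (if 3 ≤ p then (if p + 4 ≤ n then stdVec K n (p + 3) else 0) else 0)
         else if r = 1 then (if 3 ≤ p then (if p + 5 ≤ n then stdVec K n (p + 4) else 0) else 0)
         else 0)
      else 0 := by
  rw [bst hn p q]
  split_ifs <;>
    first
      | (exfalso; omega)
      | (simp only [aBr_neg_left, aBr_zero_left, neg_zero, bst hn, neg_neg]
         all_goals (try split_ifs) <;>
           first
             | (exfalso; omega)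
             | rfl
             | (funext k
                simp only [stdVec_apply, Pi.neg_apply, Pi.zero_apply, neg_neg]
                all_goals ((try split_ifs) <;>
                  first | rfl | (exfalso; first | assumption | omega) | norm_num)))

set_option maxHeartbeats 4000000 in
lemma jacobi_basis {n : ℕ} (hn : 9 ≤ n) (p q r : ℕ) :
    aBr n (0 : K) (aBr n 0 (stdVec K n p) (stdVec K n q)) (stdVec K n r)
      + aBr n 0 (aBr n 0 (stdVec K n q) (stdVec K n r)) (stdVec K n p)
      + aBr n 0 (aBr n 0 (stdVec K n r) (stdVec K n p)) (stdVec K n q) = 0 := by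
  rw [dbl hn p q r, dbl hn q r p, dbl hn r p q]
  split_ifs <;>
    first
      | (exfalso; omega)
      | (funext k
         simp only [stdVec_apply, Pi.add_apply, Pi.neg_apply, Pi.zero_apply]
         all_goals ((try split_ifs) <;>
           first | rfl | (exfalso; first | assumption | omega) | norm_num))

lemma expand (n : ℕ) (t : K) (x y z : Fin n → K) :
    aBr n t (aBr n t x y) z = ∑ c : Fin n, ∑ a : Fin n, ∑ b : Fin n,
      (z c * (x a * y b)) •
        aBr n t (aBr n t (stdVec K n a) (stdVec K n b)) (stdVec K n c) := by
  rw [aBr_expand_right n t (aBr n t x y) z]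
  simp only [aBr_eq n t x y]
  simp only [aBr_sum_left, aBr_smul_left, Finset.smul_sum, smul_smul]

theorem jacobi_of_zero {n : ℕ} (hn : 9 ≤ n) (x y z : Fin n → K) :
    aBr n 0 (aBr n 0 x y) z + aBr n 0 (aBr n 0 y z) x + aBr n 0 (aBr n 0 z x) y = 0 := by
  rw [expand n 0 x y z, expand n 0 y z x, expand n 0 z x y]
  have R1 : (∑ c : Fin n, ∑ a : Fin n, ∑ b : Fin n,
        (z c * (x a * y b)) •
          aBr n (0 : K) (aBr n 0 (stdVec K n a) (stdVec K n b)) (stdVec K n c))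
      = ∑ a : Fin n, ∑ b : Fin n, ∑ c : Fin n,
        (z c * (x a * y b)) •
          aBr n (0 : K) (aBr n 0 (stdVec K n a) (stdVec K n b)) (stdVec K n c) := by
    rw [Finset.sum_comm]
    exact Finset.sum_congr rfl fun _ _ => Finset.sum_comm
  have R2 : (∑ c : Fin n, ∑ a : Fin n, ∑ b : Fin n,
        (x c * (y a * z b)) •
          aBr n (0 : K) (aBr n 0 (stdVec K n a) (stdVec K n b)) (stdVec K n c))
      = ∑ a : Fin n, ∑ b : Fin n, ∑ c : Fin n,
        (x a * (y b * z c)) •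
          aBr n (0 : K) (aBr n 0 (stdVec K n b) (stdVec K n c)) (stdVec K n a) := rfl
  have R3 : (∑ c : Fin n, ∑ a : Fin n, ∑ b : Fin n,
        (y c * (z a * x b)) •
          aBr n (0 : K) (aBr n 0 (stdVec K n a) (stdVec K n b)) (stdVec K n c))
      = ∑ a : Fin n, ∑ b : Fin n, ∑ c : Fin n,
        (y b * (z c * x a)) •
          aBr n (0 : K) (aBr n 0 (stdVec K n c) (stdVec K n a)) (stdVec K n b) :=
    Eq.trans (Finset.sum_congr rfl fun _ _ => Finset.sum_comm) Finset.sum_comm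
  rw [R1, R2, R3]
  simp only [← Finset.sum_add_distrib]
  refine Finset.sum_eq_zero fun a _ => Finset.sum_eq_zero fun b _ =>
    Finset.sum_eq_zero fun c _ => ?_
  have s1 : z c * (x a * y b) = x a * y b * z c := by ring
  have s2 : x a * (y b * z c) = x a * y b * z c := by ring
  have s3 : y b * (z c * x a) = x a * y b * z c := by ring
  rw [s1, s2, s3, ← smul_add, ← smul_add, jacobi_basis hn a b c, smul_zero]

/-- For `n ≥ 9` and `t ∈ K`, the bracket of `𝔞_{4,n}(t)` satisfies
the Jacobi identity if and only if `t = 0`. -/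
theorem stmt_17 {K : Type} [Field K] [CharZero K] [IsAlgClosed K] {n : ℕ}
    (hn : 9 ≤ n) (t : K) :
    (∀ x y z : Fin n → K,
      aBr n t (aBr n t x y) z + aBr n t (aBr n t y z) x + aBr n t (aBr n t z x) y = 0)
      ↔ t = 0 := by
  constructor
  · intro h
    have h1 := h (stdVec K n 1) (stdVec K n 2) (stdVec K n 3)
    rw [fw12 hn t, aBr_zero_left, fw23 hn t, aBr_smul_left, fw61 hn t, fw31 hn t,
      aBr_neg_left, fw52 hn t] at h1
    have h2 := congrFun h1 ⟨8, by omega⟩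
    simp only [stdVec_apply, Pi.add_apply, Pi.neg_apply, Pi.smul_apply, Pi.zero_apply,
      smul_eq_mul, neg_neg] at h2
    norm_num at h2
    have h3 : t * t = 0 := by linear_combination (1 / 3 : K) * h2
    exact mul_self_eq_zero.mp h3
  · intro ht
    subst ht
    intro x y z
    exact jacobi_of_zero hn x y z
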